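/- For all integers δ, a ≥ 1, every integer m ≥ 0 and every divisor d of δ: (1) d_{1/(δ/d)}(σ^d_m(a)) = σ^δ_m(a) · T_{δ/d}; (2) σ^δ_m(a) · T_{δ/gcd(a,δ)} = σ^δ_m(a); (3) σ^δ_m(a) = d_{1/(δ/gcd(δ,a))}(σ^{gcd(δ,a)}_m(a)). -/

import Mathlib

noncomputable section

/-- `G = (ℝ/ℤ)^r`. -/
abbrev Gr (r : ℕ) : Type := Fin r → AddCircle (1 : ℝ)

/-- The group algebra `𝒢 = ℚ[G]`. -/
abbrev GA (r : ℕ) : Type := AddMonoidAlgebra ℚ (Gr r)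

/-- The division operator `d_{1/d}`, the ℚ-linear operator determined by
`d_{1/d}((θ)) = d^{-r} • ∑_{τ : d • τ = θ} (τ)`. -/
noncomputable def divOp (r d : ℕ) : GA r →ₗ[ℚ] GA r :=
  (Finsupp.lsum ℚ fun θ : Gr r =>
    LinearMap.toSpanSingleton ℚ (GA r)
      (AddMonoidAlgebra.ofCoeff
        (((d : ℚ) ^ r)⁻¹ • ∑ᶠ τ ∈ {τ : Gr r | d • τ = θ}, Finsupp.single τ (1 : ℚ)))) ∘ₗ
    (AddMonoidAlgebra.coeffLinearEquiv ℚ).toLinearMap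

/-- `T_n := d_{1/n}((0))`, the average of the `n`-torsion elements of `G`. -/
noncomputable def Tor (r n : ℕ) : GA r := divOp r n (AddMonoidAlgebra.ofCoeff (Finsupp.single 0 1))

/-- The refined divisor-sum `σ^δ_m(a) := ∑_{k ∣ a} (a/k)^m • T_{δ/gcd(δ,k)}`. -/
noncomputable def sigmaRef (r δ m a : ℕ) : GA r :=
  ∑ k ∈ a.divisors, ((a / k : ℕ) : ℚ) ^ m • Tor r (δ / Nat.gcd δ k)

namespace Aux

abbrev A : Type := AddCircle (1 : ℝ)

instance : Fact ((0:ℝ) < 1) := ⟨one_pos⟩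

def gen (n : ℕ) : A := (((n : ℝ)⁻¹ : ℝ) : A)

lemma nsmul_gen (n : ℕ) : n • gen n = 0 := by
  rcases Nat.eq_zero_or_pos n with h | h
  · subst h; simp
  · have : (n:ℝ) ≠ 0 := Nat.cast_ne_zero.2 h.ne'
    rw [gen, ← AddCircle.coe_nsmul, nsmul_eq_mul, mul_inv_cancel₀ this]
    exact AddCircle.coe_period 1

lemma addOrderOf_gen {n : ℕ} (hn : 0 < n) : addOrderOf (gen n) = n := by
  have := AddCircle.addOrderOf_period_div (p := (1:ℝ)) (n := n) hn
  simpa [gen, one_div] using this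

def cyc (n : ℕ) : ZMod n →+ A :=
  ZMod.lift n ⟨zmultiplesHom A (gen n), by
    simp [zmultiplesHom, natCast_zsmul, nsmul_gen n]⟩

lemma cyc_intCast (n : ℕ) (k : ℤ) : cyc n (k : ZMod n) = k • gen n := by
  simp [cyc, zmultiplesHom]

lemma cyc_injective {n : ℕ} (hn : 0 < n) : Function.Injective (cyc n) := by
  haveI : NeZero n := ⟨hn.ne'⟩
  rw [cyc, ZMod.lift_injective]
  intro m hm
  simp only [zmultiplesHom_apply] at hm
  rw [ZMod.intCast_zmod_eq_zero_iff_dvd]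
  have := (addOrderOf_dvd_iff_zsmul_eq_zero (x := gen n)).2 hm
  rwa [addOrderOf_gen hn] at this

lemma nsmul_cyc (n : ℕ) (k : ZMod n) : n • cyc n k = 0 := by
  rw [← map_nsmul]
  have : n • k = 0 := by
    have : (n : ZMod n) = 0 := ZMod.natCast_self n
    rw [nsmul_eq_mul, this, zero_mul]
  rw [this, map_zero]

lemma mem_range_cyc {n : ℕ} (hn : 0 < n) (x : A) :
    n • x = 0 ↔ x ∈ Set.range (cyc n) := by
  constructor
  · intro hx
    induction x using QuotientAddGroup.induction_on with
    | H t =>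
    rw [← AddCircle.coe_nsmul, AddCircle.coe_eq_zero_iff] at hx
    obtain ⟨z, hz⟩ := hx
    refine ⟨(z : ZMod n), ?_⟩
    rw [cyc_intCast]
    have hn' : (n:ℝ) ≠ 0 := Nat.cast_ne_zero.2 hn.ne'
    have ht : t = z • (n:ℝ)⁻¹ := by
      have h : (z : ℝ) = n * t := by simpa using hz
      rw [zsmul_eq_mul, h]
      field_simp
    rw [gen, ← AddCircle.coe_zsmul, ← ht]
  · rintro ⟨k, rfl⟩
    exact nsmul_cyc n k

variable {r : ℕ}

/-- coordinatewise torsion embedding -/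
def iota (r n : ℕ) : (Fin r → ZMod n) →+ Gr r where
  toFun k := fun i => cyc n (k i)
  map_zero' := by funext i; simp
  map_add' x y := by funext i; simp

lemma iota_injective {n : ℕ} (hn : 0 < n) : Function.Injective (iota r n) := by
  intro x y h
  funext i
  exact cyc_injective hn (congrFun h i)

lemma nsmul_iota (n : ℕ) (k : Fin r → ZMod n) : n • iota r n k = 0 := by
  funext i
  simpa [iota] using nsmul_cyc n (k i)

lemma nsmul_iota_of_dvd {n N : ℕ} (h : n ∣ N) (k : Fin r → ZMod n) :
    N • iota r n k = 0 := by
  obtain ⟨c, rfl⟩ := h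
  calc (n * c) • iota r n k = c • (n • iota r n k) := by rw [mul_comm, mul_smul]
  _ = 0 := by rw [nsmul_iota, smul_zero]

lemma mem_range_iota {n : ℕ} (hn : 0 < n) (τ : Gr r) :
    n • τ = 0 ↔ τ ∈ Set.range (iota r n) := by
  constructor
  · intro hτ
    have h : ∀ i, ∃ k, cyc n k = τ i := by
      intro i
      exact (mem_range_cyc hn _).1 (congrFun hτ i)
    choose k hk using h
    exact ⟨k, funext hk⟩
  · rintro ⟨k, rfl⟩
    exact nsmul_iota n k

lemma nsmul_surjective {n : ℕ} (hn : 0 < n) :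
    Function.Surjective (fun τ : Gr r => n • τ) := by
  intro θ
  refine ⟨fun i => DivisibleBy.div (θ i) (n : ℤ), ?_⟩
  funext i
  have := DivisibleBy.div_cancel (θ i) (n := (n:ℤ)) (by exact_mod_cast hn.ne')
  simpa [natCast_zsmul] using this

/-- transfer a finsum over a torsion-solution set to a `Fintype` sum -/
lemma finsum_single_eq {n : ℕ} (θ : Gr r) {β : Type} [Fintype β]
    (g : β → Gr r) (hg : Function.Injective g)
    (hrange : Set.range g = {τ : Gr r | n • τ = θ}) :
    ∑ᶠ τ ∈ {τ : Gr r | n • τ = θ}, Finsupp.single τ (1:ℚ) =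
      ∑ b : β, Finsupp.single (g b) (1:ℚ) := by
  rw [← hrange, finsum_mem_range hg, finsum_eq_sum_of_fintype]

lemma finsum_single_eq' {n : ℕ} (θ : Gr r) {β : Type} [Fintype β]
    (g : β → Gr r) (hg : Function.Injective g)
    (hrange : Set.range g = {τ : Gr r | n • τ = θ}) :
    ∑ᶠ τ ∈ {τ : Gr r | n • τ = θ}, (AddMonoidAlgebra.single τ (1:ℚ) : GA r) =
      ∑ b : β, AddMonoidAlgebra.single (g b) (1:ℚ) := by
  rw [← hrange, finsum_mem_range hg, finsum_eq_sum_of_fintype]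

lemma divOp_single (d : ℕ) (θ : Gr r) (c : ℚ) :
    divOp r d (AddMonoidAlgebra.single θ c) =
      c • AddMonoidAlgebra.ofCoeff (((d : ℚ) ^ r)⁻¹ •
        ∑ᶠ τ ∈ {τ : Gr r | d • τ = θ}, Finsupp.single τ (1 : ℚ)) := by
  rw [divOp, LinearMap.comp_apply]
  erw [Finsupp.lsum_single]
  rw [LinearMap.toSpanSingleton_apply]

/-- the canonical parametrization of the solution set of `d • τ = θ` -/
lemma range_shift_iota {d : ℕ} (hd : 0 < d) {θ τ0 : Gr r} (h : d • τ0 = θ) :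
    Set.range (fun k : Fin r → ZMod d => τ0 + iota r d k) = {τ : Gr r | d • τ = θ} := by
  ext τ
  constructor
  · rintro ⟨k, rfl⟩
    simp only [Set.mem_setOf_eq, smul_add, nsmul_iota, h, add_zero]
  · intro hτ
    have h0 : d • (τ - τ0) = 0 := by
      rw [smul_sub, hτ, h, sub_self]
    obtain ⟨k, hk⟩ := (mem_range_iota hd _).1 h0
    exact ⟨k, by dsimp only; rw [hk]; abel⟩

lemma shift_iota_injective {d : ℕ} (hd : 0 < d) (τ0 : Gr r) :
    Function.Injective (fun k : Fin r → ZMod d => τ0 + iota r d k) := by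
  intro x y h
  exact iota_injective hd (add_left_cancel h)

lemma divOp_single_repr {d : ℕ} [NeZero d] (hd : 0 < d) {θ τ0 : Gr r} (h : d • τ0 = θ) :
    divOp r d (AddMonoidAlgebra.single θ (1:ℚ)) =
      ((d : ℚ) ^ r)⁻¹ •
        ∑ k : Fin r → ZMod d, AddMonoidAlgebra.single (τ0 + iota r d k) (1:ℚ) := by
  rw [divOp_single, one_smul,
    finsum_single_eq θ _ (shift_iota_injective hd τ0) (range_shift_iota hd h),
    AddMonoidAlgebra.ofCoeff_smul, AddMonoidAlgebra.ofCoeff_sum]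
  rfl

lemma Tor_repr {n : ℕ} [NeZero n] (hn : 0 < n) :
    Tor r n = ((n : ℚ) ^ r)⁻¹ •
      ∑ k : Fin r → ZMod n, AddMonoidAlgebra.single (iota r n k) (1:ℚ) := by
  rw [Tor, AddMonoidAlgebra.ofCoeff_single, divOp_single_repr hn (τ0 := 0) (by rw [smul_zero])]
  simp only [zero_add]

lemma range_iota_eq {n : ℕ} (hn : 0 < n) :
    Set.range (iota r n) = {τ : Gr r | n • τ = 0} := by
  ext τ
  exact (mem_range_iota hn τ).symm

lemma divOp_Tor {e n : ℕ} (he : 0 < e) (hn : 0 < n) :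
    divOp r e (Tor r n) = Tor r (e * n) := by
  haveI : NeZero e := ⟨he.ne'⟩
  haveI : NeZero n := ⟨hn.ne'⟩
  have hen : 0 < e * n := Nat.mul_pos he hn
  haveI : NeZero (e * n) := ⟨hen.ne'⟩
  have hsurj : ∀ k : Fin r → ZMod n, ∃ τ : Gr r, e • τ = iota r n k :=
    fun k => nsmul_surjective he _
  choose τ0 hτ0 using hsurj
  set G : (Fin r → ZMod n) × (Fin r → ZMod e) → Gr r :=
    fun p => τ0 p.1 + iota r e p.2 with hG
  have hGinj : Function.Injective G := by
    rintro ⟨k, j⟩ ⟨k', j'⟩ h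
    simp only [hG] at h
    have h2 : iota r n k = iota r n k' := by
      have := congrArg (fun τ : Gr r => e • τ) h
      rwa [smul_add, smul_add, nsmul_iota, nsmul_iota, add_zero, add_zero, hτ0, hτ0] at this
    have hk : k = k' := iota_injective hn h2
    subst hk
    simp only [Prod.mk.injEq, true_and]
    exact iota_injective he (add_left_cancel h)
  have hGrange : Set.range G = {τ : Gr r | (e * n) • τ = 0} := by
    ext τ
    constructor
    · rintro ⟨⟨k, j⟩, rfl⟩
      show (e * n) • G (k, j) = 0
      simp only [hG]
      rw [smul_add, nsmul_iota_of_dvd ⟨n, rfl⟩, add_zero, mul_comm, mul_smul, hτ0,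
        nsmul_iota]
    · intro hτ
      have h1 : n • (e • τ) = 0 := by
        rw [← mul_smul, mul_comm]
        exact hτ
      obtain ⟨k, hk⟩ := (mem_range_iota hn _).1 h1
      have h2 : e • (τ - τ0 k) = 0 := by rw [smul_sub, hτ0, hk, sub_self]
      obtain ⟨j, hj⟩ := (mem_range_iota he _).1 h2
      exact ⟨⟨k, j⟩, by simp only [hG]; rw [hj]; abel⟩
  calc divOp r e (Tor r n)
      = ((n:ℚ)^r)⁻¹ • ∑ k : Fin r → ZMod n,
          divOp r e (AddMonoidAlgebra.single (iota r n k) (1:ℚ)) := by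
        rw [Tor_repr hn, map_smul, map_sum]
    _ = ((n:ℚ)^r)⁻¹ • ∑ k : Fin r → ZMod n, ((e:ℚ)^r)⁻¹ •
          ∑ j : Fin r → ZMod e, AddMonoidAlgebra.single (τ0 k + iota r e j) (1:ℚ) := by
        refine congrArg _ (Finset.sum_congr rfl fun k _ => ?_)
        exact divOp_single_repr he (hτ0 k)
    _ = (((e * n : ℕ):ℚ)^r)⁻¹ • ∑ l : Fin r → ZMod (e * n),
          AddMonoidAlgebra.single (iota r (e * n) l) (1:ℚ) := by
        rw [← Finset.smul_sum, smul_smul]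
        congr 1
        · push_cast
          rw [mul_pow, mul_inv]
          ring
        · rw [← Fintype.sum_prod_type',
            ← finsum_single_eq' (0 : Gr r) G hGinj hGrange,
            finsum_single_eq' (0 : Gr r) (iota r (e * n)) (iota_injective hen)
              (range_iota_eq hen)]
    _ = Tor r (e * n) := (Tor_repr hen).symm

lemma single_mul_single' (x y : Gr r) (a b : ℚ) :
    (AddMonoidAlgebra.single x a : GA r) * AddMonoidAlgebra.single y b =
      AddMonoidAlgebra.single (x + y) (a * b) :=
  AddMonoidAlgebra.single_mul_single ..

lemma sum_single_hom_eq {α β : Type} [AddCommGroup α] [Fintype α] [Fintype β]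
    (f : α →+ Gr r) (g : β → Gr r) (hg : Function.Injective g)
    (hrange : Set.range ⇑f = Set.range g) :
    ∃ c : ℕ, 0 < c ∧ c * Fintype.card β = Fintype.card α ∧
      ∑ a : α, (AddMonoidAlgebra.single (f a) (1:ℚ) : GA r) =
        c • ∑ b : β, (AddMonoidAlgebra.single (g b) (1:ℚ) : GA r) := by
  classical
  have hmem : ∀ a, f a ∈ Set.range g := fun a => hrange ▸ Set.mem_range_self a
  obtain ⟨b0, -⟩ := hmem 0
  haveI : Nonempty β := ⟨b0⟩
  set q : α → β := fun a => Function.invFun g (f a) with hq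
  have hgq : ∀ a, g (q a) = f a := fun a => Function.invFun_eq (hmem a)
  set c : ℕ := (Finset.univ.filter fun a : α => f a = 0).card with hc
  have hfib : ∀ b : β, (Finset.univ.filter fun a : α => q a = b).card = c := by
    intro b
    have hbmem : g b ∈ Set.range ⇑f := by rw [hrange]; exact Set.mem_range_self b
    obtain ⟨a0, ha0⟩ := hbmem
    have hfilter : (Finset.univ.filter fun a : α => q a = b) =
        (Finset.univ.filter fun a : α => f a = g b) := by
      ext a
      simp only [Finset.mem_filter, Finset.mem_univ, true_and]
      constructor
      · rintro rfl
        exact (hgq a).symm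
      · intro h
        apply hg
        rw [hgq, h]
    rw [hfilter, hc]
    refine Finset.card_bij' (fun a _ => a - a0) (fun a _ => a + a0) ?_ ?_ ?_ ?_
    · intro a ha
      simp only [Finset.mem_filter, Finset.mem_univ, true_and] at ha ⊢
      rw [map_sub, ha, ha0, sub_self]
    · intro a ha
      simp only [Finset.mem_filter, Finset.mem_univ, true_and] at ha ⊢
      rw [map_add, ha, ha0, zero_add]
    · intro a _
      simp
    · intro a _
      simp
  refine ⟨c, ?_, ?_, ?_⟩
  · rw [hc]
    refine Finset.card_pos.2 ⟨0, ?_⟩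
    simp only [Finset.mem_filter, Finset.mem_univ, true_and, map_zero]
  · have hcard := Finset.card_eq_sum_card_fiberwise
      (f := q) (s := Finset.univ) (t := Finset.univ) (fun x _ => Finset.mem_univ _)
    rw [Finset.card_univ] at hcard
    rw [hcard, Finset.sum_congr rfl fun b _ => hfib b, Finset.sum_const, Finset.card_univ,
      smul_eq_mul, mul_comm]
  · have h1 : ∑ a : α, (AddMonoidAlgebra.single (f a) (1:ℚ) : GA r) =
        ∑ a : α, (AddMonoidAlgebra.single (g (q a)) (1:ℚ) : GA r) :=
      Finset.sum_congr rfl fun a _ => by rw [hgq]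
    rw [h1, ← Finset.sum_fiberwise' Finset.univ q
      (fun b => (AddMonoidAlgebra.single (g b) (1:ℚ) : GA r)), Finset.smul_sum]
    refine Finset.sum_congr rfl fun b _ => ?_
    rw [Finset.sum_const, hfib b]

lemma Tor_mul_Tor {m n : ℕ} (hm : 0 < m) (hn : 0 < n) :
    Tor r m * Tor r n = Tor r (Nat.lcm m n) := by
  haveI : NeZero m := ⟨hm.ne'⟩
  haveI : NeZero n := ⟨hn.ne'⟩
  set L := Nat.lcm m n with hLdef
  have hL : 0 < L := Nat.pos_of_ne_zero (Nat.lcm_ne_zero hm.ne' hn.ne')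
  haveI : NeZero L := ⟨hL.ne'⟩
  set W : ((Fin r → ZMod m) × (Fin r → ZMod n)) →+ Gr r :=
    (iota r m).comp (AddMonoidHom.fst _ _) + (iota r n).comp (AddMonoidHom.snd _ _) with hW
  have hWapp : ∀ p : (Fin r → ZMod m) × (Fin r → ZMod n),
      W p = iota r m p.1 + iota r n p.2 := fun p => rfl
  have hrangeW : Set.range ⇑W = Set.range (iota r L) := by
    ext τ
    constructor
    · rintro ⟨⟨j, k⟩, rfl⟩
      rw [← mem_range_iota hL, hWapp, smul_add,
        nsmul_iota_of_dvd (Nat.dvd_lcm_left m n), nsmul_iota_of_dvd (Nat.dvd_lcm_right m n),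
        add_zero]
    · rintro ⟨l, rfl⟩
      have hτ : L • iota r L l = 0 := nsmul_iota L l
      set τ : Gr r := iota r L l with hτdef
      set g := Nat.gcd m n with hg
      have hgpos : 0 < g := Nat.gcd_pos_of_pos_left n hm
      set n' := n / g with hn'
      have hgn' : g * n' = n := Nat.mul_div_cancel' (Nat.gcd_dvd_right m n)
      have hmn' : m * n' = L := by
        apply Nat.eq_of_mul_eq_mul_left hgpos
        calc g * (m * n') = m * (g * n') := by ring
          _ = m * n := by rw [hgn']
          _ = g * L := (Nat.gcd_mul_lcm m n).symm
      set A := Int.gcdA m n with hA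
      set B := Int.gcdB m n with hB
      have hbez : (g : ℤ) = m * A + n * B := by
        rw [hg, ← Int.gcd_natCast_natCast]
        exact Int.gcd_eq_gcd_ab (m : ℤ) (n : ℤ)
      set σ : Gr r := (B * (n' : ℤ)) • τ with hσ
      have hLz : (L : ℤ) • τ = 0 := by rw [natCast_zsmul, hτ]
      have hmσ : m • σ = 0 := by
        rw [← natCast_zsmul, hσ, ← mul_smul]
        have hmul : (m : ℤ) * (B * (n' : ℤ)) = B * (L : ℤ) := by
          have h3 : ((m : ℤ) * (n' : ℤ)) = (L : ℤ) := by exact_mod_cast hmn'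
          linear_combination B * h3
        rw [hmul, mul_smul, hLz, smul_zero]
      have hnτσ : n • (τ - σ) = 0 := by
        rw [← natCast_zsmul, hσ, smul_sub, ← mul_smul]
        have key : (n : ℤ) - n * (B * n') = A * (L : ℤ) := by
          have h2 : (g : ℤ) * (n' : ℤ) = (n : ℤ) := by exact_mod_cast hgn'
          have h3 : ((m : ℤ) * (n' : ℤ)) = (L : ℤ) := by exact_mod_cast hmn'
          linear_combination (n' : ℤ) * hbez - h2 + A * h3
        calc (n:ℤ) • τ - ((n:ℤ) * (B * (n':ℤ))) • τ = ((n:ℤ) - n * (B * n')) • τ := by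
              rw [sub_smul]
          _ = (A * (L:ℤ)) • τ := by rw [key]
          _ = 0 := by rw [mul_smul, hLz, smul_zero]
      obtain ⟨j, hj⟩ := (mem_range_iota hm σ).1 hmσ
      obtain ⟨k, hk⟩ := (mem_range_iota hn (τ - σ)).1 hnτσ
      exact ⟨⟨j, k⟩, by rw [hWapp, hj, hk]; abel⟩
  obtain ⟨c, hc0, hccard, hcsum⟩ :=
    sum_single_hom_eq W (iota r L) (iota_injective hL) hrangeW
  have hcardβ : Fintype.card (Fin r → ZMod L) = L ^ r := by
    rw [Fintype.card_fun, ZMod.card, Fintype.card_fin]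
  have hcardα : Fintype.card ((Fin r → ZMod m) × (Fin r → ZMod n)) = m ^ r * n ^ r := by
    rw [Fintype.card_prod, Fintype.card_fun, Fintype.card_fun, ZMod.card, ZMod.card,
      Fintype.card_fin]
  have hqcoef : ((m:ℚ)^r)⁻¹ * ((n:ℚ)^r)⁻¹ * (c : ℚ) = ((L:ℚ)^r)⁻¹ := by
    have hcc : (c : ℚ) * (L:ℚ)^r = (m:ℚ)^r * (n:ℚ)^r := by
      have h := hccard
      rw [hcardβ, hcardα] at h
      exact_mod_cast congrArg (fun x : ℕ => (x : ℚ)) h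
    have hm0 : ((m:ℚ)^r) ≠ 0 := pow_ne_zero _ (Nat.cast_ne_zero.2 hm.ne')
    have hn0 : ((n:ℚ)^r) ≠ 0 := pow_ne_zero _ (Nat.cast_ne_zero.2 hn.ne')
    have hL0 : ((L:ℚ)^r) ≠ 0 := pow_ne_zero _ (Nat.cast_ne_zero.2 hL.ne')
    field_simp
    linarith [hcc]
  rw [Tor_repr hm, Tor_repr hn, Tor_repr hL]
  rw [smul_mul_assoc, mul_smul_comm, smul_smul, Finset.sum_mul_sum]
  simp only [single_mul_single', one_mul]
  have hws' : (∑ p : (Fin r → ZMod m) × (Fin r → ZMod n),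
      (AddMonoidAlgebra.single (W p) (1:ℚ) : GA r)) =
      ∑ i : Fin r → ZMod m, ∑ j : Fin r → ZMod n,
        (AddMonoidAlgebra.single (iota r m i + iota r n j) (1:ℚ) : GA r) :=
    Fintype.sum_prod_type _
  rw [← hws', hcsum, ← Nat.cast_smul_eq_nsmul ℚ, smul_smul, hqcoef]

lemma nat_div_mul_div {g d δ : ℕ} (h1 : g ∣ d) (h2 : d ∣ δ) (hd : 0 < d) :
    (δ / d) * (d / g) = δ / g := by
  rw [Nat.div_mul_div_comm h2 h1, mul_comm δ d, Nat.mul_div_mul_left _ _ hd]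

lemma nat_lcm_div_div {δ x y : ℕ} (hδ : 0 < δ) (hx : x ∣ δ) (hy : y ∣ δ) :
    Nat.lcm (δ / x) (δ / y) = δ / Nat.gcd x y := by
  have hx0 : 0 < x := Nat.pos_of_dvd_of_pos hx hδ
  have hy0 : 0 < y := Nat.pos_of_dvd_of_pos hy hδ
  have hgx : Nat.gcd x y ∣ x := Nat.gcd_dvd_left x y
  have hgy : Nat.gcd x y ∣ y := Nat.gcd_dvd_right x y
  have hgδ : Nat.gcd x y ∣ δ := hgx.trans hx
  have hg0 : 0 < Nat.gcd x y := Nat.gcd_pos_of_pos_left y hx0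
  apply Nat.dvd_antisymm
  · apply Nat.lcm_dvd
    · exact ⟨x / Nat.gcd x y, by
        rw [Nat.div_mul_div_comm hx hgx, mul_comm δ x, Nat.mul_div_mul_left _ _ hx0]⟩
    · exact ⟨y / Nat.gcd x y, by
        rw [Nat.div_mul_div_comm hy hgy, mul_comm δ y, Nat.mul_div_mul_left _ _ hy0]⟩
  · set L := Nat.lcm (δ / x) (δ / y) with hLdef
    have h1 : δ ∣ x * L := by
      conv_lhs => rw [← Nat.mul_div_cancel' hx]
      exact mul_dvd_mul_left x (Nat.dvd_lcm_left _ _)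
    have h2 : δ ∣ y * L := by
      conv_lhs => rw [← Nat.mul_div_cancel' hy]
      exact mul_dvd_mul_left y (Nat.dvd_lcm_right _ _)
    have h3 : δ ∣ Nat.gcd x y * L := by
      have := Nat.dvd_gcd h1 h2
      rwa [Nat.gcd_mul_right] at this
    have h4 : Nat.gcd x y * (δ / Nat.gcd x y) ∣ Nat.gcd x y * L := by
      rw [Nat.mul_div_cancel' hgδ]
      exact h3
    exact (mul_dvd_mul_iff_left hg0.ne').1 h4

section assembly

variable {δ a m d : ℕ}

lemma part1 (r : ℕ) (hδ : 1 ≤ δ) (ha : 1 ≤ a) (hd : d ∣ δ) :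
    divOp r (δ / d) (sigmaRef r d m a) = sigmaRef r δ m a * Tor r (δ / d) := by
  have hd0 : 0 < d := Nat.pos_of_dvd_of_pos hd hδ
  have hδd : 0 < δ / d := Nat.div_pos (Nat.le_of_dvd hδ hd) hd0
  rw [sigmaRef, map_sum, sigmaRef, Finset.sum_mul]
  refine Finset.sum_congr rfl fun k hk => ?_
  obtain ⟨hka, -⟩ := Nat.mem_divisors.1 hk
  have hk0 : 0 < k := Nat.pos_of_dvd_of_pos hka ha
  have hgdk : 0 < Nat.gcd d k := Nat.gcd_pos_of_pos_left k hd0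
  have hgδk : 0 < Nat.gcd δ k := Nat.gcd_pos_of_pos_left k hδ
  have hdg : 0 < d / Nat.gcd d k := Nat.div_pos (Nat.le_of_dvd hd0 (Nat.gcd_dvd_left d k)) hgdk
  rw [map_smul, divOp_Tor hδd hdg, nat_div_mul_div (Nat.gcd_dvd_left d k) hd hd0,
    smul_mul_assoc, Tor_mul_Tor
      (Nat.div_pos (Nat.le_of_dvd hδ (Nat.gcd_dvd_left δ k)) hgδk)
      (Nat.div_pos (Nat.le_of_dvd hδ hd) hd0),
    nat_lcm_div_div hδ (Nat.gcd_dvd_left δ k) hd]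
  congr 2
  rw [Nat.gcd_comm δ k, Nat.gcd_assoc, Nat.gcd_eq_right hd, Nat.gcd_comm k d]

lemma part2 (r : ℕ) (hδ : 1 ≤ δ) (ha : 1 ≤ a) :
    sigmaRef r δ m a * Tor r (δ / Nat.gcd a δ) = sigmaRef r δ m a := by
  have hgaδ : 0 < Nat.gcd a δ := Nat.gcd_pos_of_pos_left δ ha
  rw [sigmaRef, Finset.sum_mul]
  refine Finset.sum_congr rfl fun k hk => ?_
  obtain ⟨hka, -⟩ := Nat.mem_divisors.1 hk
  have hk0 : 0 < k := Nat.pos_of_dvd_of_pos hka ha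
  have hgδk : 0 < Nat.gcd δ k := Nat.gcd_pos_of_pos_left k hδ
  rw [smul_mul_assoc, Tor_mul_Tor
      (Nat.div_pos (Nat.le_of_dvd hδ (Nat.gcd_dvd_left δ k)) hgδk)
      (Nat.div_pos (Nat.le_of_dvd hδ (Nat.gcd_dvd_right a δ)) hgaδ),
    nat_lcm_div_div hδ (Nat.gcd_dvd_left δ k) (Nat.gcd_dvd_right a δ)]
  rw [Nat.gcd_eq_left (Nat.dvd_gcd ((Nat.gcd_dvd_right δ k).trans hka) (Nat.gcd_dvd_left δ k))]

lemma part3 (r : ℕ) (hδ : 1 ≤ δ) (ha : 1 ≤ a) :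
    sigmaRef r δ m a = divOp r (δ / Nat.gcd δ a) (sigmaRef r (Nat.gcd δ a) m a) := by
  set g := Nat.gcd δ a with hgdef
  have hg0 : 0 < g := Nat.gcd_pos_of_pos_left a hδ
  have hgδ : g ∣ δ := Nat.gcd_dvd_left δ a
  have hδg : 0 < δ / g := Nat.div_pos (Nat.le_of_dvd hδ hgδ) hg0
  rw [sigmaRef, sigmaRef, map_sum]
  refine Finset.sum_congr rfl fun k hk => ?_
  obtain ⟨hka, -⟩ := Nat.mem_divisors.1 hk
  have hk0 : 0 < k := Nat.pos_of_dvd_of_pos hka ha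
  have hggk : 0 < Nat.gcd g k := Nat.gcd_pos_of_pos_left k hg0
  rw [map_smul, divOp_Tor hδg
      (Nat.div_pos (Nat.le_of_dvd hg0 (Nat.gcd_dvd_left g k)) hggk),
    nat_div_mul_div (Nat.gcd_dvd_left g k) hgδ hg0]
  congr 3
  rw [hgdef, Nat.gcd_assoc, Nat.gcd_eq_right hka]

end assembly

end Aux

/-- For `d ∣ δ`: (1) `d_{1/(δ/d)}(σ^d_m(a)) = σ^δ_m(a) · T_{δ/d}`;
(2) `σ^δ_m(a) · T_{δ/gcd(a,δ)} = σ^δ_m(a)`;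
(3) `σ^δ_m(a) = d_{1/(δ/gcd(δ,a))}(σ^{gcd(δ,a)}_m(a))`. -/


theorem statement4 (r : ℕ) (hr : 1 ≤ r) (δ a m d : ℕ)
    (hδ : 1 ≤ δ) (ha : 1 ≤ a) (hd : d ∣ δ) :
    divOp r (δ / d) (sigmaRef r d m a) = sigmaRef r δ m a * Tor r (δ / d) ∧
    sigmaRef r δ m a * Tor r (δ / Nat.gcd a δ) = sigmaRef r δ m a ∧
    sigmaRef r δ m a = divOp r (δ / Nat.gcd δ a) (sigmaRef r (Nat.gcd δ a) m a) :=
  ⟨Aux.part1 r hδ ha hd, Aux.part2 r hδ ha, Aux.part3 r hδ ha⟩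

end
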